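/- Let i be a position of string T of length n such that the maximal even palindrome centered at i is u·uᴿ, and suppose wᴿ is the longest nonempty prefix of T[i+|u|+1..n] such that w occurs in T[1..i−|u|−1]. Then for any SAGP w'·g'·u'·u'ᴿ·w'ᴿ for pivot i with |u'| < |u|, one has |w'u'| ≤ |wu|. (In particular, no SAGP for pivot i with a strictly shorter palindrome part can have a strictly longer arm.) -/

import Mathlib

/-- 1-based substring T[b..e]. -/
def sub (T : List Char) (b e : ℕ) : List Char := (T.drop (b-1)).take (e+1-b)

/-- The string x occurs in T beginning at 1-based position p. -/
def occursAt (T x : List Char) (p : ℕ) : Prop := x <+: T.drop (p-1)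

/-- T has an even palindrome of radius r centered at position i (i.e. T[i-r+1..i+r] is a palindrome). -/
def evenPalAt (T : List Char) (i r : ℕ) : Prop :=
  r ≤ i ∧ i + r ≤ T.length ∧ (sub T (i-r+1) (i+r)).reverse = sub T (i-r+1) (i+r)

/-- The SAGP w·g·u·uᴿ·wᴿ (w, g, u nonempty) occurs in T with pivot i. -/
def SAGPat (T : List Char) (i : ℕ) (w g u : List Char) : Prop :=
  w ≠ [] ∧ g ≠ [] ∧ u ≠ [] ∧ ∃ b, 1 ≤ b ∧ b + (w.length + g.length + u.length) = i + 1 ∧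
    occursAt T (w ++ g ++ u ++ u.reverse ++ w.reverse) b

/-- w·g·u·uᴿ·wᴿ is a longest SAGP for pivot i (maximal arm length |wu|). -/
def longestSAGP (T : List Char) (i : ℕ) (w g u : List Char) : Prop :=
  SAGPat T i w g u ∧ ∀ w' g' u', SAGPat T i w' g' u' → w'.length + u'.length ≤ w.length + u.length

/-- w·g·u·uᴿ·wᴿ is a canonical longest SAGP for pivot i (moreover |u| maximal among longest). -/
def canonSAGP (T : List Char) (i : ℕ) (w g u : List Char) : Prop :=
  longestSAGP T i w g u ∧ ∀ w' g' u', longestSAGP T i w' g' u' → u'.length ≤ u.length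

/-- Position i is of type-1: some SAGP for pivot i has u·uᴿ equal to the maximal even palindrome centered at i. -/
def type1 (T : List Char) (i : ℕ) : Prop :=
  ∃ w g u, SAGPat T i w g u ∧ ∀ r, evenPalAt T i r → r ≤ u.length

/-- no SAGP for pivot i with a strictly shorter palindrome part can
have a strictly longer arm than the one built from the maximal palindrome and the
longest extendable w. -/
private lemma prefix_drop_of_append_prefix {α} {x y l : List α}
    (h : x ++ y <+: l) : y <+: l.drop x.length := by
  obtain ⟨s, hs⟩ := h
  exact ⟨s, by rw [← hs, List.append_assoc, List.drop_left]⟩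

private lemma prefix_drop_both {α} {x l : List α} {d : ℕ} (hd : d ≤ x.length)
    (h : x <+: l) : x.drop d <+: l.drop d := by
  obtain ⟨s, hs⟩ := h
  exact ⟨s, by rw [← hs, List.drop_append_of_le_length hd]⟩

theorem shorter_palindrome_no_longer_arm (T : List Char) (i : ℕ) (u w : List Char)
    (hu : evenPalAt T i u.length) (huocc : sub T (i - u.length + 1) i = u)
    (hmax : ∀ r, evenPalAt T i r → r ≤ u.length)
    (hw : w ≠ []) (hwpre : w.reverse <+: T.drop (i + u.length))
    (hwocc : ∃ p, 1 ≤ p ∧ p + w.length ≤ i - u.length ∧ occursAt T w p)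
    (hwlong : ∀ v : List Char, v ≠ [] → v <+: T.drop (i + u.length) →
       (∃ p, 1 ≤ p ∧ p + v.length ≤ i - u.length ∧ occursAt T v.reverse p) →
       v.length ≤ w.length) :
    ∀ w' g' u', SAGPat T i w' g' u' → u'.length < u.length →
      w'.length + u'.length ≤ w.length + u.length := by
  intro w' g' u' hS hlt
  obtain ⟨hw', hg', hu', b, hb1, hbsum, hocc⟩ := hS
  by_cases hcase : w'.length + u'.length ≤ u.length
  · omega
  · push_neg at hcase
    have hiu : u.length ≤ i := hu.1
    have hg1 : 1 ≤ g'.length := List.length_pos_iff.mpr hg'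
    set d : ℕ := u.length - u'.length with hd
    set t : ℕ := w'.length + u'.length - u.length with ht
    have hdw : d ≤ w'.length := by omega
    -- extract the occurrence of w'.reverse at position i + u'.length + 1
    have h1 : (w' ++ g' ++ u' ++ u'.reverse) ++ w'.reverse <+: T.drop (b-1) := by
      simpa [List.append_assoc, occursAt] using hocc
    have h2 : w'.reverse <+: (T.drop (b-1)).drop (w' ++ g' ++ u' ++ u'.reverse).length :=
      prefix_drop_of_append_prefix h1
    rw [List.drop_drop] at h2
    have hlen : (b-1) + (w' ++ g' ++ u' ++ u'.reverse).length = i + u'.length := by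
      simp only [List.length_append, List.length_reverse]
      omega
    rw [hlen] at h2
    -- the tail v of w'.reverse sticking out past position i + u.length
    set v : List Char := (w'.reverse).drop d with hv
    have hvlen : v.length = t := by
      simp [hv]
      omega
    have hvpre : v <+: T.drop (i + u.length) := by
      have := prefix_drop_both (by simpa using hdw) h2
      rw [List.drop_drop] at this
      have he : i + u'.length + d = i + u.length := by omega
      rwa [he] at this
    have hvrev : v.reverse = w'.take t := by
      rw [hv, List.reverse_drop, List.reverse_reverse, List.length_reverse]
      congr 1
      omega
    have hwpref : w' <+: T.drop (b-1) := by
      refine List.IsPrefix.trans ?_ hocc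
      simp [List.append_assoc]
    have hvrevocc : occursAt T v.reverse b := by
      rw [hvrev]
      exact List.IsPrefix.trans (List.take_prefix _ _) hwpref
    have hne : v ≠ [] := by
      intro h
      rw [h] at hvlen
      simp at hvlen
      omega
    have := hwlong v hne hvpre ⟨b, hb1, by rw [hvlen]; omega, hvrevocc⟩
    omega
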